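/- For a fixed CFG and input of length n, the number of applications of each forward step of the variant is bounded by the corresponding Earley step: 𝒱_1 ≤ ℰ_1, 𝒱_2 ≤ ℰ_2, and 𝒱_3 ≤ ℰ_3. -/

import Mathlib

/-! Formalization of Earley parsing and the Nederhof–Satta variant. -/

variable {T N : Type}

/-- A context-free grammar: a start nonterminal and a set of productions. -/
structure CFG (T N : Type) where
  initial : N
  rules : Set (N × List (Symbol T N))

/-- One rewriting step of the grammar. -/
def CFG.Produces (g : CFG T N) (u v : List (Symbol T N)) : Prop :=
  ∃ A α p q, (A, α) ∈ g.rules ∧ u = p ++ [Symbol.nonterminal A] ++ q ∧ v = p ++ α ++ q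

/-- The derivation relation ⇒* (reflexive-transitive closure of rewriting). -/
def CFG.Derives (g : CFG T N) : List (Symbol T N) → List (Symbol T N) → Prop :=
  Relation.ReflTransGen g.Produces

/-- The language of the grammar: { w | S ⇒* w }. -/
def CFG.language (g : CFG T N) : Set (List T) :=
  { w | g.Derives [Symbol.nonterminal g.initial] (w.map Symbol.terminal) }

/-- `inputSlice w i j` is the substring a_{i+1}⋯a_j of `w` (0-based: w[i..j)), as symbols. -/
def inputSlice (w : List T) (i j : ℕ) : List (Symbol T N) :=
  ((w.take j).drop i).map Symbol.terminal

/-- The least Earley table: `Earley g w A α β i j` means the dotted item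
[A → α • β] is inserted in E_{i,j}. -/
inductive Earley (g : CFG T N) (w : List T) :
    N → List (Symbol T N) → List (Symbol T N) → ℕ → ℕ → Prop where
  | init {α} : (g.initial, α) ∈ g.rules → Earley g w g.initial [] α 0 0
  | predict {B α A β i j γ} : Earley g w B α (Symbol.nonterminal A :: β) i j →
      (A, γ) ∈ g.rules → Earley g w A [] γ j j
  | scan {A α a β i j} : Earley g w A α (Symbol.terminal a :: β) i j →
      w[j]? = some a → Earley g w A (α ++ [Symbol.terminal a]) β i (j + 1)
  | complete {A α B β i k γ j} : Earley g w A α (Symbol.nonterminal B :: β) i k →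
      Earley g w B γ [] k j → (B, γ) ∈ g.rules →
      Earley g w A (α ++ [Symbol.nonterminal B]) β i j

mutual
  /-- Forward part of the variant: `VarU g w β j` means suffix item [β] ∈ U_j. -/
  inductive VarU (g : CFG T N) (w : List T) : List (Symbol T N) → ℕ → Prop where
    | init {α} : (g.initial, α) ∈ g.rules → VarU g w α 0
    | predict {A β j γ} : VarU g w (Symbol.nonterminal A :: β) j →
        (A, γ) ∈ g.rules → VarU g w γ j
    | scan {a β j} : VarU g w (Symbol.terminal a :: β) j → w[j]? = some a →
        VarU g w β (j + 1)
    | complete {B β k γ j} : VarU g w (Symbol.nonterminal B :: β) k → (B, γ) ∈ g.rules →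
        VarT g w γ k j → VarU g w β j

  /-- Backward part of the variant: `VarT g w β j m` means suffix item [β] ∈ T_{j,m}. -/
  inductive VarT (g : CFG T N) (w : List T) : List (Symbol T N) → ℕ → ℕ → Prop where
    | empty {m} : VarU g w [] m → VarT g w [] m m
    | scan {a β j m} : VarU g w (Symbol.terminal a :: β) j → w[j]? = some a →
        VarT g w β (j + 1) m → VarT g w (Symbol.terminal a :: β) j m
    | complete {B β k γ j m} : VarU g w (Symbol.nonterminal B :: β) k → (B, γ) ∈ g.rules →
        VarT g w γ k j → VarT g w β j m → VarT g w (Symbol.nonterminal B :: β) k m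
end

/-- Number of initialization steps: distinct right-hand sides of start productions. -/
noncomputable def countInit (g : CFG T N) : ℕ :=
  Set.ncard {α | (g.initial, α) ∈ g.rules}

/-- ℰ₁: applicable instantiations of Earley's prediction rule. -/
noncomputable def countE1 (g : CFG T N) (w : List T) : ℕ :=
  Set.ncard {x : N × List (Symbol T N) × N × List (Symbol T N) × ℕ × ℕ × List (Symbol T N) |
    match x with
      | (B, α, A, β, i, j, γ) =>
          Earley g w B α (Symbol.nonterminal A :: β) i j ∧ (A, γ) ∈ g.rules}

/-- ℰ₂: applicable instantiations of Earley's scanning rule. -/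
noncomputable def countE2 (g : CFG T N) (w : List T) : ℕ :=
  Set.ncard {x : N × List (Symbol T N) × T × List (Symbol T N) × ℕ × ℕ |
    match x with
      | (A, α, a, β, i, j) =>
          Earley g w A α (Symbol.terminal a :: β) i j ∧ w[j]? = some a}

/-- ℰ₃: applicable instantiations of Earley's completion rule. -/
noncomputable def countE3 (g : CFG T N) (w : List T) : ℕ :=
  Set.ncard {x : N × List (Symbol T N) × N × List (Symbol T N) × ℕ × ℕ × List (Symbol T N) × ℕ |
    match x with
      | (A, α, B, β, i, k, γ, j) =>
          Earley g w A α (Symbol.nonterminal B :: β) i k ∧ (B, γ) ∈ g.rules ∧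
        Earley g w B γ [] k j}

/-- 𝒱₁: applicable instantiations of the variant's forward prediction rule. -/
noncomputable def countV1 (g : CFG T N) (w : List T) : ℕ :=
  Set.ncard {x : N × List (Symbol T N) × ℕ × List (Symbol T N) |
    match x with
      | (A, β, j, γ) =>
          VarU g w (Symbol.nonterminal A :: β) j ∧ (A, γ) ∈ g.rules}

/-- 𝒱₂: applicable instantiations of the variant's forward scanning rule. -/
noncomputable def countV2 (g : CFG T N) (w : List T) : ℕ :=
  Set.ncard {x : T × List (Symbol T N) × ℕ |
    match x with
      | (a, β, j) =>
          VarU g w (Symbol.terminal a :: β) j ∧ w[j]? = some a}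

/-- 𝒱₃: applicable instantiations of the variant's forward completion rule. -/
noncomputable def countV3 (g : CFG T N) (w : List T) : ℕ :=
  Set.ncard {x : N × List (Symbol T N) × ℕ × List (Symbol T N) × ℕ |
    match x with
      | (B, β, k, γ, j) =>
          VarU g w (Symbol.nonterminal B :: β) k ∧ (B, γ) ∈ g.rules ∧ VarT g w γ k j}

/-- 𝒱₄: applicable instantiations of the variant's backward-initialization rule. -/
noncomputable def countV4 (g : CFG T N) (w : List T) : ℕ :=
  Set.ncard {m : ℕ | VarU g w [] m}

/-- 𝒱₅: applicable instantiations of the variant's backward scanning rule. -/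
noncomputable def countV5 (g : CFG T N) (w : List T) : ℕ :=
  Set.ncard {x : T × List (Symbol T N) × ℕ × ℕ |
    match x with
      | (a, β, j, m) =>
          VarU g w (Symbol.terminal a :: β) j ∧ w[j]? = some a ∧ VarT g w β (j + 1) m}

/-- 𝒱₆: applicable instantiations of the variant's backward completion rule. -/
noncomputable def countV6 (g : CFG T N) (w : List T) : ℕ :=
  Set.ncard {x : N × List (Symbol T N) × ℕ × List (Symbol T N) × ℕ × ℕ |
    match x with
      | (B, β, k, γ, j, m) =>
          VarU g w (Symbol.nonterminal B :: β) k ∧ (B, γ) ∈ g.rules ∧ VarT g w γ k j ∧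
        VarT g w β j m}


/-! ### Auxiliary lemmas -/

private def MT (g : CFG T N) (w : List T) (β : List (Symbol T N)) (k m : ℕ) : Prop :=
  ∀ A α i, Earley g w A α β i k → Earley g w A (α ++ β) [] i m

section Key
variable {g : CFG T N} {w : List T}

private theorem keyU {β : List (Symbol T N)} {j : ℕ} (h : VarU g w β j) :
    ∃ A α i, Earley g w A α β i j := by
  refine VarU.rec (motive_1 := fun β j _ => ∃ A α i, Earley g w A α β i j)
    (motive_2 := fun β k m _ => MT g w β k m) ?_ ?_ ?_ ?_ ?_ ?_ ?_ h
  · intro α hr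
    exact ⟨g.initial, [], 0, Earley.init hr⟩
  · rintro A β j γ _ hr ⟨B, α, i, hE⟩
    exact ⟨A, [], j, Earley.predict hE hr⟩
  · rintro a β j _ ha ⟨A, α, i, hE⟩
    exact ⟨A, α ++ [Symbol.terminal a], i, Earley.scan hE ha⟩
  · rintro B β k γ j _ hr _ ⟨A, α, i, hE⟩ ihT
    have hp : Earley g w B [] γ k k := Earley.predict hE hr
    have hγ : Earley g w B γ [] k j := by simpa using ihT B [] k hp
    exact ⟨A, α ++ [Symbol.nonterminal B], i, Earley.complete hE hγ hr⟩
  · intro m _ _ A α i hE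
    simpa using hE
  · intro a β j m _ ha _ _ ihT A α i hE
    have h1 : Earley g w A (α ++ [Symbol.terminal a]) β i (j + 1) := Earley.scan hE ha
    have h2 := ihT A (α ++ [Symbol.terminal a]) i h1
    simpa [List.append_assoc] using h2
  · intro B β k γ j m _ hr _ _ _ ihTγ ihTβ A α i hE
    have hp : Earley g w B [] γ k k := Earley.predict hE hr
    have hγ : Earley g w B γ [] k j := by simpa using ihTγ B [] k hp
    have hc : Earley g w A (α ++ [Symbol.nonterminal B]) β i j := Earley.complete hE hγ hr
    have h2 := ihTβ A (α ++ [Symbol.nonterminal B]) i hc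
    simpa [List.append_assoc] using h2

private theorem keyT {β : List (Symbol T N)} {k m : ℕ} (h : VarT g w β k m) :
    ∀ A α i, Earley g w A α β i k → Earley g w A (α ++ β) [] i m := by
  refine VarT.rec (motive_1 := fun β j _ => ∃ A α i, Earley g w A α β i j)
    (motive_2 := fun β k m _ => MT g w β k m) ?_ ?_ ?_ ?_ ?_ ?_ ?_ h
  · intro α hr
    exact ⟨g.initial, [], 0, Earley.init hr⟩
  · rintro A β j γ _ hr ⟨B, α, i, hE⟩
    exact ⟨A, [], j, Earley.predict hE hr⟩
  · rintro a β j _ ha ⟨A, α, i, hE⟩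
    exact ⟨A, α ++ [Symbol.terminal a], i, Earley.scan hE ha⟩
  · rintro B β k γ j _ hr _ ⟨A, α, i, hE⟩ ihT
    have hp : Earley g w B [] γ k k := Earley.predict hE hr
    have hγ : Earley g w B γ [] k j := by simpa using ihT B [] k hp
    exact ⟨A, α ++ [Symbol.nonterminal B], i, Earley.complete hE hγ hr⟩
  · intro m _ _ A α i hE
    simpa using hE
  · intro a β j m _ ha _ _ ihT A α i hE
    have h1 : Earley g w A (α ++ [Symbol.terminal a]) β i (j + 1) := Earley.scan hE ha
    have h2 := ihT A (α ++ [Symbol.terminal a]) i h1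
    simpa [List.append_assoc] using h2
  · intro B β k γ j m _ hr _ _ _ ihTγ ihTβ A α i hE
    have hp : Earley g w B [] γ k k := Earley.predict hE hr
    have hγ : Earley g w B γ [] k j := by simpa using ihTγ B [] k hp
    have hc : Earley g w A (α ++ [Symbol.nonterminal B]) β i j := Earley.complete hE hγ hr
    have h2 := ihTβ A (α ++ [Symbol.nonterminal B]) i hc
    simpa [List.append_assoc] using h2

private theorem earley_bound {A : N} {α β : List (Symbol T N)} {i j : ℕ}
    (h : Earley g w A α β i j) :
    (A, α ++ β) ∈ g.rules ∧ i ≤ j ∧ j ≤ w.length := by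
  induction h with
  | init hr => exact ⟨hr, le_refl 0, Nat.zero_le _⟩
  | predict h hr ih => exact ⟨hr, le_refl _, ih.2.2⟩
  | scan h ha ih =>
      obtain ⟨hlt, -⟩ := List.getElem?_eq_some_iff.mp ha
      exact ⟨by simpa [List.append_assoc] using ih.1,
        ih.2.1.trans (Nat.le_succ _), Nat.succ_le_of_lt hlt⟩
  | complete h1 h2 hr ih1 ih2 =>
      exact ⟨by simpa [List.append_assoc] using ih1.1,
        ih1.2.1.trans ih2.2.1, ih2.2.2⟩

end Key

theorem variant_forward_steps_le' (g : CFG T N) (w : List T) (hfin : g.rules.Finite) :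
    countV1 g w ≤ countE1 g w ∧ countV2 g w ≤ countE2 g w ∧
      countV3 g w ≤ countE3 g w := by
  classical
  set n := w.length with hn
  set M : ℕ := hfin.toFinset.sup (fun p => p.2.length) with hM
  have hlen : ∀ {A : N} {ρ : List (Symbol T N)}, (A, ρ) ∈ g.rules → ρ.length ≤ M := by
    intro A ρ hr
    exact Finset.le_sup (f := fun p => p.2.length) (hfin.mem_toFinset.mpr hr)
  -- Finiteness of the three Earley counting sets
  have hE1fin : {x : N × List (Symbol T N) × N × List (Symbol T N) × ℕ × ℕ × List (Symbol T N) |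
      match x with
        | (B, α, A, β, i, j, γ) =>
            Earley g w B α (Symbol.nonterminal A :: β) i j ∧ (A, γ) ∈ g.rules}.Finite := by
    set f : N × List (Symbol T N) × N × List (Symbol T N) × ℕ × ℕ × List (Symbol T N) →
        (N × List (Symbol T N)) × ℕ × (N × List (Symbol T N)) × ℕ × ℕ :=
      fun x => ((x.1, x.2.1 ++ Symbol.nonterminal x.2.2.1 :: x.2.2.2.1), x.2.1.length,
        (x.2.2.1, x.2.2.2.2.2.2), x.2.2.2.2.1, x.2.2.2.2.2.1) with hf
    have hinj : Function.Injective f := by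
      rintro ⟨B, α, A, β, i, j, γ⟩ ⟨B', α', A', β', i', j', γ'⟩ h
      simp only [hf, Prod.mk.injEq] at h
      obtain ⟨⟨hB, happ⟩, hl, ⟨hA, hγ⟩, hi, hj⟩ := h
      obtain ⟨hα, hcons⟩ := List.append_inj happ hl
      simp only [List.cons.injEq, Symbol.nonterminal.injEq] at hcons
      simp_all
    have ht : ((g.rules ×ˢ (Set.Iic M ×ˢ (g.rules ×ˢ (Set.Iic n ×ˢ Set.Iic n)))) :
        Set ((N × List (Symbol T N)) × ℕ × (N × List (Symbol T N)) × ℕ × ℕ)).Finite :=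
      hfin.prod ((Set.finite_Iic M).prod (hfin.prod ((Set.finite_Iic n).prod (Set.finite_Iic n))))
    refine Set.Finite.of_finite_image (ht.subset ?_) hinj.injOn
    rintro _ ⟨⟨B, α, A, β, i, j, γ⟩, hx, rfl⟩
    obtain ⟨hE, hr⟩ := hx
    obtain ⟨hmem, hij, hjn⟩ := earley_bound hE
    refine ⟨hmem, ?_, hr, hij.trans hjn, hjn⟩
    have := hlen hmem
    simp only [List.length_append] at this
    exact Set.mem_Iic.mpr (le_trans (Nat.le_add_right _ _) this)
  have hE2fin : {x : N × List (Symbol T N) × T × List (Symbol T N) × ℕ × ℕ |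
      match x with
        | (A, α, a, β, i, j) =>
            Earley g w A α (Symbol.terminal a :: β) i j ∧ w[j]? = some a}.Finite := by
    set f : N × List (Symbol T N) × T × List (Symbol T N) × ℕ × ℕ →
        (N × List (Symbol T N)) × ℕ × ℕ × ℕ :=
      fun x => ((x.1, x.2.1 ++ Symbol.terminal x.2.2.1 :: x.2.2.2.1), x.2.1.length,
        x.2.2.2.2.1, x.2.2.2.2.2) with hf
    have hinj : Function.Injective f := by
      rintro ⟨A, α, a, β, i, j⟩ ⟨A', α', a', β', i', j'⟩ h
      simp only [hf, Prod.mk.injEq] at h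
      obtain ⟨⟨hA, happ⟩, hl, hi, hj⟩ := h
      obtain ⟨hα, hcons⟩ := List.append_inj happ hl
      simp only [List.cons.injEq, Symbol.terminal.injEq] at hcons
      simp_all
    have ht : ((g.rules ×ˢ (Set.Iic M ×ˢ (Set.Iic n ×ˢ Set.Iic n))) :
        Set ((N × List (Symbol T N)) × ℕ × ℕ × ℕ)).Finite :=
      hfin.prod ((Set.finite_Iic M).prod ((Set.finite_Iic n).prod (Set.finite_Iic n)))
    refine Set.Finite.of_finite_image (ht.subset ?_) hinj.injOn
    rintro _ ⟨⟨A, α, a, β, i, j⟩, hx, rfl⟩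
    obtain ⟨hE, ha⟩ := hx
    obtain ⟨hmem, hij, hjn⟩ := earley_bound hE
    refine ⟨hmem, ?_, hij.trans hjn, hjn⟩
    have := hlen hmem
    simp only [List.length_append] at this
    exact Set.mem_Iic.mpr (le_trans (Nat.le_add_right _ _) this)
  have hE3fin : {x : N × List (Symbol T N) × N × List (Symbol T N) × ℕ × ℕ ×
      List (Symbol T N) × ℕ |
      match x with
        | (A, α, B, β, i, k, γ, j) =>
            Earley g w A α (Symbol.nonterminal B :: β) i k ∧ (B, γ) ∈ g.rules ∧
          Earley g w B γ [] k j}.Finite := by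
    set f : N × List (Symbol T N) × N × List (Symbol T N) × ℕ × ℕ × List (Symbol T N) × ℕ →
        (N × List (Symbol T N)) × ℕ × (N × List (Symbol T N)) × ℕ × ℕ × ℕ :=
      fun x => ((x.1, x.2.1 ++ Symbol.nonterminal x.2.2.1 :: x.2.2.2.1), x.2.1.length,
        (x.2.2.1, x.2.2.2.2.2.2.1), x.2.2.2.2.1, x.2.2.2.2.2.1, x.2.2.2.2.2.2.2) with hf
    have hinj : Function.Injective f := by
      rintro ⟨A, α, B, β, i, k, γ, j⟩ ⟨A', α', B', β', i', k', γ', j'⟩ h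
      simp only [hf, Prod.mk.injEq] at h
      obtain ⟨⟨hA, happ⟩, hl, ⟨hB, hγ⟩, hi, hk, hj⟩ := h
      obtain ⟨hα, hcons⟩ := List.append_inj happ hl
      simp only [List.cons.injEq, Symbol.nonterminal.injEq] at hcons
      simp_all
    have ht : ((g.rules ×ˢ (Set.Iic M ×ˢ (g.rules ×ˢ (Set.Iic n ×ˢ (Set.Iic n ×ˢ Set.Iic n))))) :
        Set ((N × List (Symbol T N)) × ℕ × (N × List (Symbol T N)) × ℕ × ℕ × ℕ)).Finite :=
      hfin.prod ((Set.finite_Iic M).prod (hfin.prod ((Set.finite_Iic n).prod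
        ((Set.finite_Iic n).prod (Set.finite_Iic n)))))
    refine Set.Finite.of_finite_image (ht.subset ?_) hinj.injOn
    rintro _ ⟨⟨A, α, B, β, i, k, γ, j⟩, hx, rfl⟩
    obtain ⟨hE, hr, hE2⟩ := hx
    obtain ⟨hmem, hik, hkn⟩ := earley_bound hE
    obtain ⟨-, hkj, hjn⟩ := earley_bound hE2
    refine ⟨hmem, ?_, hr, hik.trans hkn, hkn, hjn⟩
    have := hlen hmem
    simp only [List.length_append] at this
    exact Set.mem_Iic.mpr (le_trans (Nat.le_add_right _ _) this)
  refine ⟨?_, ?_, ?_⟩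
  · -- V1 ≤ E1
    set proj : N × List (Symbol T N) × N × List (Symbol T N) × ℕ × ℕ × List (Symbol T N) →
        N × List (Symbol T N) × ℕ × List (Symbol T N) :=
      fun x => (x.2.2.1, x.2.2.2.1, x.2.2.2.2.2.1, x.2.2.2.2.2.2) with hp
    have hsub : {x : N × List (Symbol T N) × ℕ × List (Symbol T N) |
        match x with
          | (A, β, j, γ) =>
              VarU g w (Symbol.nonterminal A :: β) j ∧ (A, γ) ∈ g.rules} ⊆
        proj '' {x | match x with
          | (B, α, A, β, i, j, γ) =>
              Earley g w B α (Symbol.nonterminal A :: β) i j ∧ (A, γ) ∈ g.rules} := by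
      rintro ⟨A, β, j, γ⟩ ⟨hU, hr⟩
      obtain ⟨B, α, i, hE⟩ := keyU hU
      exact ⟨(B, α, A, β, i, j, γ), ⟨hE, hr⟩, rfl⟩
    calc countV1 g w ≤ (proj '' _).ncard := Set.ncard_le_ncard hsub (hE1fin.image _)
      _ ≤ countE1 g w := Set.ncard_image_le hE1fin
  · -- V2 ≤ E2
    set proj : N × List (Symbol T N) × T × List (Symbol T N) × ℕ × ℕ →
        T × List (Symbol T N) × ℕ :=
      fun x => (x.2.2.1, x.2.2.2.1, x.2.2.2.2.2) with hp
    have hsub : {x : T × List (Symbol T N) × ℕ |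
        match x with
          | (a, β, j) =>
              VarU g w (Symbol.terminal a :: β) j ∧ w[j]? = some a} ⊆
        proj '' {x | match x with
          | (A, α, a, β, i, j) =>
              Earley g w A α (Symbol.terminal a :: β) i j ∧ w[j]? = some a} := by
      rintro ⟨a, β, j⟩ ⟨hU, ha⟩
      obtain ⟨A, α, i, hE⟩ := keyU hU
      exact ⟨(A, α, a, β, i, j), ⟨hE, ha⟩, rfl⟩
    calc countV2 g w ≤ (proj '' _).ncard := Set.ncard_le_ncard hsub (hE2fin.image _)
      _ ≤ countE2 g w := Set.ncard_image_le hE2fin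
  · -- V3 ≤ E3
    set proj : N × List (Symbol T N) × N × List (Symbol T N) × ℕ × ℕ ×
        List (Symbol T N) × ℕ → N × List (Symbol T N) × ℕ × List (Symbol T N) × ℕ :=
      fun x => (x.2.2.1, x.2.2.2.1, x.2.2.2.2.2.1, x.2.2.2.2.2.2.1, x.2.2.2.2.2.2.2) with hp
    have hsub : {x : N × List (Symbol T N) × ℕ × List (Symbol T N) × ℕ |
        match x with
          | (B, β, k, γ, j) =>
              VarU g w (Symbol.nonterminal B :: β) k ∧ (B, γ) ∈ g.rules ∧ VarT g w γ k j} ⊆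
        proj '' {x | match x with
          | (A, α, B, β, i, k, γ, j) =>
              Earley g w A α (Symbol.nonterminal B :: β) i k ∧ (B, γ) ∈ g.rules ∧
            Earley g w B γ [] k j} := by
      rintro ⟨B, β, k, γ, j⟩ ⟨hU, hr, hT⟩
      obtain ⟨A, α, i, hE⟩ := keyU hU
      have hp2 : Earley g w B [] γ k k := Earley.predict hE hr
      have hγ : Earley g w B γ [] k j := by simpa using keyT hT B [] k hp2
      exact ⟨(A, α, B, β, i, k, γ, j), ⟨hE, hr, hγ⟩, rfl⟩
    calc countV3 g w ≤ (proj '' _).ncard := Set.ncard_le_ncard hsub (hE3fin.image _)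
      _ ≤ countE3 g w := Set.ncard_image_le hE3fin

/-- 𝒱₁ ≤ ℰ₁, 𝒱₂ ≤ ℰ₂ and 𝒱₃ ≤ ℰ₃. -/
theorem variant_forward_steps_le (g : CFG T N) (w : List T) (hfin : g.rules.Finite) :
    countV1 g w ≤ countE1 g w ∧ countV2 g w ≤ countE2 g w ∧
      countV3 g w ≤ countE3 g w :=
  variant_forward_steps_le' g w hfin
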